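/- Assume D > 1, and let H be the subgroup of G generated by {c₁, …, c_D} ∪ {uₘ : m ≥ 2 and m ≠ D+1} ∪ {γ, η}, where γ = u₀ c₁ u₁ and η = u₀⁻¹ F u_{D+1}⁻¹ F⁻¹ u₀. Then for every element w of the subgroup generated by {c₁, …, c_D} ∪ {uₙ : n ≥ 0}, one has φ^{D+2}(w) ∈ H. -/
import Mathlib


abbrev G : Type := FreeGroup (ℤ ⊕ ℤ)

/-- generator cₙ -/
def c (n : ℤ) : G := FreeGroup.of (Sum.inl n)
/-- generator uₙ -/
def u (n : ℤ) : G := FreeGroup.of (Sum.inr n)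

/-- F = c₁ c₂ ⋯ c_D -/
def F (D : ℕ) : G := ((List.range D).map (fun i => c ((i : ℤ) + 1))).prod

/-- the tangle endomorphism for minimum delay time D -/
def φ (D : ℕ) : G →* G := FreeGroup.lift fun x =>
  match x with
  | Sum.inl n => if n = (D : ℤ) then (F D)⁻¹ * (u 0)⁻¹ * F D else c (n + 1)
  | Sum.inr n => u (n + 1)

lemma phi_u (D : ℕ) (n : ℤ) : φ D (u n) = u (n+1) := by
  simp [φ, u, FreeGroup.lift_apply_of]
lemma phi_c (D : ℕ) (n : ℤ) (h : n ≠ (D:ℤ)) : φ D (c n) = c (n+1) := by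
  simp [φ, c, u, FreeGroup.lift_apply_of, h]
lemma phi_cD (D : ℕ) : φ D (c D) = (F D)⁻¹ * (u 0)⁻¹ * F D := by
  simp [φ, c, u, FreeGroup.lift_apply_of]

lemma F_succ (k : ℕ) : F (k+1) = F k * c ((k:ℤ)+1) := by
  simp only [F, List.range_succ]; simp

lemma F_zero : F 0 = 1 := by simp [F]

lemma phi_F_lt (D : ℕ) (k : ℕ) (hk : k < D) : φ D (F k) = (c 1)⁻¹ * F (k+1) := by
  induction k with
  | zero => simp [F_zero, F_succ]
  | succ k ih =>
    rw [F_succ, map_mul, ih (by omega), phi_c _ _ (by push_cast; omega), mul_assoc]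
    congr 1
    rw [F_succ (k+1)]
    push_cast; ring_nf

lemma phi_F (D : ℕ) (hD : 1 ≤ D) : φ D (F D) = (c 1)⁻¹ * (u 0)⁻¹ * F D := by
  obtain ⟨E, rfl⟩ : ∃ E, D = E + 1 := ⟨D - 1, by omega⟩
  rw [F_succ, map_mul, phi_F_lt _ _ (by omega)]
  have : ((E:ℤ) + 1) = ((E+1 : ℕ) : ℤ) := by push_cast; ring
  rw [this, phi_cD, F_succ]
  group

lemma iter_u (D : ℕ) (k : ℕ) (n : ℤ) : (⇑(φ D))^[k] (u n) = u (n + k) := by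
  induction k generalizing n with
  | zero => simp
  | succ k ih =>
    rw [Function.iterate_succ_apply, phi_u, ih]
    congr 1; push_cast; ring

lemma iter_c (D : ℕ) (k : ℕ) (n : ℤ) (h : ∀ m : ℕ, m < k → n + m ≠ (D:ℤ)) :
    (⇑(φ D))^[k] (c n) = c (n + k) := by
  induction k generalizing n with
  | zero => simp
  | succ k ih =>
    rw [Function.iterate_succ_apply, phi_c _ _ (by simpa using h 0 (by omega)), ih]
    · congr 1; push_cast; ring
    · intro m hm
      have := h (m+1) (by omega)
      push_cast at this ⊢
      omega

/-- A k = u₀ c₁ u₁ c₂ ⋯ u_{k-1} c_k -/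
def A : ℕ → G
  | 0 => 1
  | k+1 => A k * u (k : ℤ) * c ((k : ℤ) + 1)

lemma iter_F (D : ℕ) (hD : 1 ≤ D) (k : ℕ) (hk : k ≤ D) :
    (⇑(φ D))^[k] (F D) = (A k)⁻¹ * F D := by
  induction k with
  | zero => simp [A]
  | succ k ih =>
    rw [Function.iterate_succ_apply, phi_F _ hD]
    have h1 : (⇑(φ D))^[k] ((c 1)⁻¹ * (u 0)⁻¹ * F D) =
        ((⇑(φ D))^[k] (c 1))⁻¹ * ((⇑(φ D))^[k] (u 0))⁻¹ * (⇑(φ D))^[k] (F D) := by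
      rw [iterate_map_mul, iterate_map_mul,
        iterate_map_inv, iterate_map_inv]
    rw [h1, iter_c _ _ _ (by intro m hm; push_cast; omega), iter_u, ih (by omega), A]
    group

lemma key_lt (D : ℕ) (hD : 1 ≤ D) (k : ℕ) (hk : k ≤ D) :
    (⇑(φ D))^[k+1] (c (D:ℤ)) = (F D)⁻¹ * A k * (u (k:ℤ))⁻¹ * (A k)⁻¹ * F D := by
  rw [Function.iterate_succ_apply, phi_cD]
  rw [show (F D)⁻¹ * (u 0)⁻¹ * F D = (F D)⁻¹ * (u 0)⁻¹ * F D from rfl]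
  rw [iterate_map_mul, iterate_map_mul, iterate_map_inv, iterate_map_inv,
    iter_F _ hD _ hk, iter_u]
  group

lemma iter_c1_D (D : ℕ) (hD : 1 ≤ D) :
    (⇑(φ D))^[D] (c 1) = (F D)⁻¹ * (u 0)⁻¹ * F D := by
  obtain ⟨E, rfl⟩ : ∃ E, D = E + 1 := ⟨D - 1, by omega⟩
  rw [Function.iterate_succ_apply', iter_c _ _ _ (by intro m hm; push_cast; omega)]
  rw [show (1 + (E:ℤ)) = ((E+1 : ℕ) : ℤ) from by push_cast; ring, phi_cD]

lemma P_eq (D : ℕ) (hD : 1 ≤ D) :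
    (⇑(φ D))^[D+1] (F D) =
      (F D)⁻¹ * u 0 * F D * (u (D:ℤ))⁻¹ * (A D)⁻¹ * F D := by
  rw [Function.iterate_succ_apply, phi_F _ hD, iterate_map_mul, iterate_map_mul,
    iterate_map_inv, iterate_map_inv, iter_c1_D _ hD, iter_u, iter_F _ hD _ le_rfl]
  group

lemma key_D (D : ℕ) (hD : 1 ≤ D) :
    (⇑(φ D))^[D+2] (c (D:ℤ)) =
      (F D)⁻¹ * A D * u (D:ℤ) *
        ((F D)⁻¹ * ((u 0)⁻¹ * F D * (u ((D:ℤ)+1))⁻¹ * (F D)⁻¹ * u 0) * F D) *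
        (u (D:ℤ))⁻¹ * (A D)⁻¹ * F D := by
  have h : (D:ℕ) + 2 = (D+1) + 1 := rfl
  rw [h, Function.iterate_succ_apply, phi_cD, iterate_map_mul, iterate_map_mul,
    iterate_map_inv, iterate_map_inv, P_eq _ hD, iter_u]
  rw [show ((0:ℤ) + ((D:ℕ)+1 : ℕ)) = (D:ℤ)+1 from by push_cast; ring]
  group

theorem stmt_8 (D : ℕ) (hD : 1 < D) :
    let γ : G := u 0 * c 1 * u 1
    let η : G := (u 0)⁻¹ * F D * (u ((D : ℤ) + 1))⁻¹ * (F D)⁻¹ * u 0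
    let H : Subgroup G := Subgroup.closure
      ({g : G | ∃ i : ℤ, 1 ≤ i ∧ i ≤ (D : ℤ) ∧ g = c i} ∪
       {g : G | ∃ m : ℤ, 2 ≤ m ∧ m ≠ (D : ℤ) + 1 ∧ g = u m} ∪ {γ, η})
    ∀ w ∈ Subgroup.closure
        ({g : G | ∃ i : ℤ, 1 ≤ i ∧ i ≤ (D : ℤ) ∧ g = c i} ∪
         {g : G | ∃ n : ℤ, 0 ≤ n ∧ g = u n}),
      (⇑(φ D))^[D + 2] w ∈ H := by
  intro γ η H
  -- basic membership facts
  have hc : ∀ i : ℤ, 1 ≤ i → i ≤ (D:ℤ) → c i ∈ H := fun i h1 h2 =>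
    Subgroup.subset_closure (Or.inl (Or.inl ⟨i, h1, h2, rfl⟩))
  have hu : ∀ m : ℤ, 2 ≤ m → m ≠ (D:ℤ)+1 → u m ∈ H := fun m h1 h2 =>
    Subgroup.subset_closure (Or.inl (Or.inr ⟨m, h1, h2, rfl⟩))
  have hγ : γ ∈ H := Subgroup.subset_closure (Or.inr (Or.inl rfl))
  have hη : η ∈ H := Subgroup.subset_closure (Or.inr (Or.inr rfl))
  have hF : ∀ k : ℕ, k ≤ D → F k ∈ H := by
    intro k hk
    induction k with
    | zero => rw [F_zero]; exact one_mem H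
    | succ k ih =>
      rw [F_succ]
      exact mul_mem (ih (by omega)) (hc _ (by omega) (by push_cast; omega))
  have hA : ∀ k : ℕ, 2 ≤ k → k ≤ D → A k ∈ H := by
    intro k h2 hk
    induction k with
    | zero => omega
    | succ k ih =>
      rcases Nat.lt_or_ge k 2 with h | h
      · -- k+1 = 2, i.e. k = 1 : A 2 = γ * c 2
        have hk1 : k = 1 := by omega
        subst hk1
        have : A 2 = γ * c 2 := by
          show A 1 * u 1 * c (1+1) = γ * c 2
          show A 0 * u 0 * c (0+1) * u 1 * c (1+1) = γ * c 2
          simp only [A]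
          norm_num [γ]
        rw [this]
        exact mul_mem hγ (hc 2 (by omega) (by push_cast; omega))
      · rw [show A (k+1) = A k * u k * c ((k:ℤ)+1) from rfl]
        exact mul_mem (mul_mem (ih h (by omega)) (hu _ (by push_cast; omega)
          (by push_cast; omega))) (hc _ (by push_cast; omega) (by push_cast; omega))
  intro w hw
  induction hw using Subgroup.closure_induction with
  | one => rw [iterate_map_one]; exact one_mem H
  | mul x y hx hy px py => rw [iterate_map_mul]; exact mul_mem px py
  | inv x hx px => rw [iterate_map_inv]; exact inv_mem px
  | mem x hx =>
    rcases hx with ⟨i, h1, h2, rfl⟩ | ⟨n, h0, rfl⟩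
    · -- generator c i, 1 ≤ i ≤ D
      obtain ⟨j, rfl⟩ : ∃ j : ℕ, (j:ℤ) = i := ⟨i.toNat, by omega⟩
      have hj1 : 1 ≤ j := by omega
      have hjD : j ≤ D := by omega
      have hsplit : (⇑(φ D))^[D+2] (c (j:ℤ)) = (⇑(φ D))^[j+2] (c (D:ℤ)) := by
        rw [show D + 2 = (j+2) + (D-j) by omega, Function.iterate_add_apply,
          iter_c _ _ _ (by intro m hm; push_cast; omega),
          show ((j:ℤ) + ((D-j:ℕ):ℤ)) = (D:ℤ) from by push_cast; omega]
      rw [hsplit]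
      rcases Nat.lt_or_ge j D with hlt | hge
      · -- j ≤ D - 1 : use key_lt with k = j+1
        rw [show j + 2 = (j+1) + 1 from rfl, key_lt _ (by omega) _ (by omega)]
        have hAj : A (j+1) ∈ H := hA _ (by omega) (by omega)
        have huj : u ((j:ℤ)+1) ∈ H := hu _ (by omega) (by omega)
        have hFD : F D ∈ H := hF D le_rfl
        rw [show ((j+1:ℕ):ℤ) = (j:ℤ)+1 from by push_cast; ring]
        exact mul_mem (mul_mem (mul_mem (mul_mem (inv_mem hFD) hAj) (inv_mem huj))
          (inv_mem hAj)) hFD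
      · -- j = D : use key_D
        have : j = D := by omega
        subst this
        rw [show j + 2 = j + 2 from rfl, key_D _ (by omega)]
        have hAD : A j ∈ H := hA _ (by omega) le_rfl
        have huD : u (j:ℤ) ∈ H := hu _ (by push_cast; omega) (by push_cast; omega)
        have hFD : F j ∈ H := hF j le_rfl
        exact mul_mem (mul_mem (mul_mem (mul_mem (mul_mem (mul_mem (inv_mem hFD) hAD) huD)
          (mul_mem (mul_mem (inv_mem hFD) hη) hFD)) (inv_mem huD)) (inv_mem hAD)) hFD
    · -- generator u n, n ≥ 0
      rw [iter_u]
      exact hu _ (by push_cast; omega) (by push_cast; omega)
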